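/- In the limit ζ → 1 (averaging every step, η → ∞), the asymptotic variance from Lemma 2 becomes Q_MB = (ασ²/M)(2c − αc² − αβ²/M)⁻¹, while in the limit ζ → 0 (one-shot, η → 0) it becomes Q_OSA = (ασ²/M)(2c − αc² − αβ²)⁻¹; and Q_MB ≤ Q_OSA with equality if and only if β = 0 or M = 1. -/

import Mathlib

open Filter

/-- Limits of the asymptotic variance `Q(ζ)` from Lemma 2: as `ζ → 1`
(mini-batch) it tends to `(ασ²/M)(2c - αc² - αβ²/M)⁻¹`; as `ζ → 0`
(one-shot) it tends to `(ασ²/M)(2c - αc² - αβ²)⁻¹`; and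
`Q_MB ≤ Q_OSA`, with equality iff `β = 0` or `M = 1`. -/
theorem stmt_11
    (α c β σ M : ℝ) (hα : 0 < α) (hc : 0 < c) (hσ : 0 < σ) (hβ : 0 ≤ β)
    (hM : 1 ≤ M) (hpos : 0 < 2 * c - α * c ^ 2 - α * β ^ 2)
    (η : ℝ → ℝ)
    (hη : ∀ ζ, η ζ = ζ / ((1 - ζ) * (α * (2 * c - α * c ^ 2))))
    (Q : ℝ → ℝ)
    (hQ : ∀ ζ, Q ζ = (α * σ ^ 2 / M)
      * (2 * c - α * c ^ 2 - α * β ^ 2 * ((1 + η ζ / M) / (1 + η ζ)))⁻¹) :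
    Tendsto Q (nhdsWithin 1 (Set.Ioo (0 : ℝ) 1))
        (nhds ((α * σ ^ 2 / M) * (2 * c - α * c ^ 2 - α * β ^ 2 / M)⁻¹))
    ∧ Tendsto Q (nhdsWithin 0 (Set.Ioo (0 : ℝ) 1))
        (nhds ((α * σ ^ 2 / M) * (2 * c - α * c ^ 2 - α * β ^ 2)⁻¹))
    ∧ (α * σ ^ 2 / M) * (2 * c - α * c ^ 2 - α * β ^ 2 / M)⁻¹
        ≤ (α * σ ^ 2 / M) * (2 * c - α * c ^ 2 - α * β ^ 2)⁻¹
    ∧ ((α * σ ^ 2 / M) * (2 * c - α * c ^ 2 - α * β ^ 2 / M)⁻¹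
          = (α * σ ^ 2 / M) * (2 * c - α * c ^ 2 - α * β ^ 2)⁻¹
        ↔ β = 0 ∨ M = 1) := by
  have hM0 : (0 : ℝ) < M := lt_of_lt_of_le one_pos hM
  have hβ2 : 0 ≤ α * β ^ 2 := by positivity
  have hA : 0 < 2 * c - α * c ^ 2 := by nlinarith
  have hαA : 0 < α * (2 * c - α * c ^ 2) := by positivity
  have hdivle : α * β ^ 2 / M ≤ α * β ^ 2 := div_le_self hβ2 hM
  have hD1 : 0 < 2 * c - α * c ^ 2 - α * β ^ 2 / M := by linarith
  have hC : 0 < α * σ ^ 2 / M := by positivity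
  -- outer function continuity
  set F : ℝ → ℝ := fun r => (α * σ ^ 2 / M) * (2 * c - α * c ^ 2 - α * β ^ 2 * r)⁻¹ with hF
  have hQF : ∀ ζ, Q ζ = F ((1 + η ζ / M) / (1 + η ζ)) := fun ζ => hQ ζ
  have hFc : ∀ r : ℝ, 2 * c - α * c ^ 2 - α * β ^ 2 * r ≠ 0 → ContinuousAt F r := by
    intro r hr
    exact continuousAt_const.mul
      (((continuousAt_const.sub (continuousAt_const.mul continuousAt_id))).inv₀ hr)
  -- η → 0 as ζ → 0⁺
  have hη0 : Tendsto η (nhdsWithin 0 (Set.Ioo (0:ℝ) 1)) (nhds 0) := by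
    have : Tendsto (fun ζ : ℝ => ζ / ((1 - ζ) * (α * (2 * c - α * c ^ 2)))) (nhds 0)
        (nhds ((0 : ℝ) / ((1 - 0) * (α * (2 * c - α * c ^ 2))))) := by
      apply ContinuousAt.tendsto
      exact continuousAt_id.div
        ((continuousAt_const.sub continuousAt_id).mul continuousAt_const)
        (by simpa using ne_of_gt hαA)
    simp only [zero_div] at this
    refine Tendsto.congr (fun ζ => (hη ζ).symm) (this.mono_left nhdsWithin_le_nhds)
  -- η → ∞ as ζ → 1⁻
  have hη1 : Tendsto η (nhdsWithin 1 (Set.Ioo (0:ℝ) 1)) atTop := by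
    have hden : Tendsto (fun ζ : ℝ => (1 - ζ) * (α * (2 * c - α * c ^ 2)))
        (nhdsWithin 1 (Set.Ioo (0:ℝ) 1)) (nhdsWithin 0 (Set.Ioi 0)) := by
      apply tendsto_nhdsWithin_of_tendsto_nhds_of_eventually_within
      · have : Tendsto (fun ζ : ℝ => (1 - ζ) * (α * (2 * c - α * c ^ 2))) (nhds 1)
            (nhds ((1 - 1) * (α * (2 * c - α * c ^ 2)))) :=
          ((continuousAt_const.sub continuousAt_id).mul continuousAt_const)
        simpa using this.mono_left nhdsWithin_le_nhds
      · filter_upwards [self_mem_nhdsWithin] with ζ hζ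
        have : 0 < 1 - ζ := by linarith [hζ.2]
        exact mul_pos this hαA
    have hinv : Tendsto (fun ζ : ℝ => ((1 - ζ) * (α * (2 * c - α * c ^ 2)))⁻¹)
        (nhdsWithin 1 (Set.Ioo (0:ℝ) 1)) atTop :=
      tendsto_inv_nhdsGT_zero.comp hden
    have hnum : Tendsto (fun ζ : ℝ => ζ) (nhdsWithin 1 (Set.Ioo (0:ℝ) 1)) (nhds 1) :=
      tendsto_id.mono_left nhdsWithin_le_nhds
    have := hnum.pos_mul_atTop one_pos hinv
    refine Tendsto.congr (fun ζ => ?_) this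
    rw [hη ζ, div_eq_mul_inv]
  -- ratio limits
  have hr1 : Tendsto (fun t : ℝ => (1 + t / M) / (1 + t)) atTop (nhds (1 / M)) := by
    have h1 : Tendsto (fun t : ℝ => (t⁻¹ + 1 / M) / (t⁻¹ + 1)) atTop
        (nhds ((0 + 1 / M) / (0 + 1))) := by
      exact (tendsto_inv_atTop_zero.add tendsto_const_nhds).div
        (tendsto_inv_atTop_zero.add tendsto_const_nhds) (by norm_num)
    rw [show (0 + 1 / M) / (0 + 1) = 1 / M by norm_num] at h1
    refine h1.congr' ?_
    filter_upwards [eventually_gt_atTop 0] with t ht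
    have ht' : t ≠ 0 := ne_of_gt ht
    field_simp
  have hr0 : Tendsto (fun t : ℝ => (1 + t / M) / (1 + t)) (nhds 0) (nhds 1) := by
    have : Tendsto (fun t : ℝ => (1 + t / M) / (1 + t)) (nhds 0)
        (nhds ((1 + 0 / M) / (1 + 0))) := by
      apply ContinuousAt.tendsto
      exact (continuousAt_const.add (continuousAt_id.div_const M)).div
        (continuousAt_const.add continuousAt_id) (by norm_num)
    simpa using this
  refine ⟨?_, ?_, ?_, ?_⟩
  · -- ζ → 1 limit
    have hne : 2 * c - α * c ^ 2 - α * β ^ 2 * (1 / M) ≠ 0 := by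
      have : α * β ^ 2 * (1 / M) = α * β ^ 2 / M := by ring
      rw [this]; exact ne_of_gt hD1
    have := ((hFc (1 / M) hne).tendsto).comp (hr1.comp hη1)
    have heq : F (1 / M) = (α * σ ^ 2 / M) * (2 * c - α * c ^ 2 - α * β ^ 2 / M)⁻¹ := by
      simp only [hF]; ring_nf
    rw [heq] at this
    exact Tendsto.congr (fun ζ => (hQF ζ).symm) this
  · -- ζ → 0 limit
    have hne : 2 * c - α * c ^ 2 - α * β ^ 2 * 1 ≠ 0 := by
      rw [mul_one]; exact ne_of_gt hpos
    have := ((hFc 1 hne).tendsto).comp (hr0.comp hη0)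
    have heq : F 1 = (α * σ ^ 2 / M) * (2 * c - α * c ^ 2 - α * β ^ 2)⁻¹ := by
      simp only [hF, mul_one]
    rw [heq] at this
    exact Tendsto.congr (fun ζ => (hQF ζ).symm) this
  · exact mul_le_mul_of_nonneg_left
      (inv_anti₀ hpos (by linarith)) (le_of_lt hC)
  · constructor
    · intro h
      have h2 := mul_left_cancel₀ (ne_of_gt hC) h
      have h3 : 2 * c - α * c ^ 2 - α * β ^ 2 / M = 2 * c - α * c ^ 2 - α * β ^ 2 :=
        inv_injective h2
      have h4 : α * β ^ 2 * (M - 1) = 0 := by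
        have : α * β ^ 2 / M = α * β ^ 2 := by linarith
        have h5 : α * β ^ 2 = α * β ^ 2 * M := by
          field_simp at this; linear_combination α * this
        nlinarith
      rcases mul_eq_zero.mp h4 with h5 | h5
      · left
        have : β ^ 2 = 0 := by
          rcases mul_eq_zero.mp h5 with h | h
          · exact absurd h (ne_of_gt hα)
          · exact h
        exact pow_eq_zero_iff (n := 2) (by norm_num) |>.mp this
      · right; linarith
    · rintro (rfl | rfl) <;> simp
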